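/- arXiv:math-ph/0501039 — 2 statements merged into one kernel-verified Lean document; each statement's English description precedes it below -/
import Mathlib

section
/- Let V be a finite-dimensional real vector space, R ⊆ V a subspace, and Ω an antisymmetric bilinear form on R. Then L = {(x, η) ∈ V ⊕ V* : x ∈ R and η|_R = Ω(x, ·)} is a linear Dirac structure on V, with ρ(L) = R, and the kernel of Ω equals L ∩ V. -/
def canPairing {V : Type*} [AddCommGroup V] [Module ℝ V]
    (pq : (V × Module.Dual ℝ V) × (V × Module.Dual ℝ V)) : ℝ :=
  pq.1.2 pq.2.1 + pq.2.2 pq.1.1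

def IsIsotropic {V : Type*} [AddCommGroup V] [Module ℝ V]
    (L : Submodule ℝ (V × Module.Dual ℝ V)) : Prop :=
  ∀ x ∈ L, ∀ y ∈ L, canPairing (x, y) = 0

def IsDirac {V : Type*} [AddCommGroup V] [Module ℝ V]
    (L : Submodule ℝ (V × Module.Dual ℝ V)) : Prop :=
  IsIsotropic L ∧ ∀ L' : Submodule ℝ (V × Module.Dual ℝ V),
    IsIsotropic L' → L ≤ L' → L' = L

/-- Given a subspace `R ⊆ V` and an antisymmetric bilinear form `Ω` on `R`,
the set `L = {(x,η) : x ∈ R, η|_R = Ω(x,·)}` is a linear Dirac structure on `V`, with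
`ρ(L) = R` and `ker Ω = L ∩ V`. -/
theorem stmt6 (V : Type*) [AddCommGroup V] [Module ℝ V] [FiniteDimensional ℝ V]
    (R : Submodule ℝ V)
    (Ω : R →ₗ[ℝ] R →ₗ[ℝ] ℝ)
    (hanti : ∀ a b : R, Ω a b = - Ω b a) :
    ∃ L : Submodule ℝ (V × Module.Dual ℝ V),
      (L : Set (V × Module.Dual ℝ V))
          = {q | ∃ hx : q.1 ∈ R, ∀ y : R, q.2 (y : V) = Ω ⟨q.1, hx⟩ y} ∧
      IsDirac L ∧
      (Prod.fst '' (L : Set (V × Module.Dual ℝ V)) = (R : Set V)) ∧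
      (∀ x : R, (∀ y : R, Ω x y = 0) ↔ ((x : V), (0 : Module.Dual ℝ V)) ∈ L) := by
  classical
  set L : Submodule ℝ (V × Module.Dual ℝ V) :=
    { carrier := {q | ∃ hx : q.1 ∈ R, ∀ y : R, q.2 (y : V) = Ω ⟨q.1, hx⟩ y}
      add_mem' := by
        rintro ⟨a, α⟩ ⟨b, β⟩ ⟨ha, hα⟩ ⟨hb, hβ⟩
        refine ⟨R.add_mem ha hb, fun y => ?_⟩
        have h2 : ∀ h : a + b ∈ R, (⟨a + b, h⟩ : R) = ⟨a, ha⟩ + ⟨b, hb⟩ :=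
          fun _ => rfl
        show (α + β) (y : V) = _
        rw [LinearMap.add_apply, hα y, hβ y]
        show _ = Ω ⟨a + b, _⟩ y
        rw [h2, map_add, LinearMap.add_apply]
      zero_mem' := ⟨R.zero_mem, fun y => by
        have : (⟨(0 : V), R.zero_mem⟩ : R) = 0 := rfl
        simp [this]⟩
      smul_mem' := by
        rintro c ⟨a, α⟩ ⟨ha, hα⟩
        refine ⟨R.smul_mem c ha, fun y => ?_⟩
        have h2 : ∀ h : c • a ∈ R, (⟨c • a, h⟩ : R) = c • ⟨a, ha⟩ :=
          fun _ => rfl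
        show (c • α) (y : V) = _
        rw [LinearMap.smul_apply, hα y]
        show _ = Ω ⟨c • a, _⟩ y
        rw [h2, map_smul, LinearMap.smul_apply] } with hLdef
  have memL : ∀ q : V × Module.Dual ℝ V,
      q ∈ L ↔ ∃ hx : q.1 ∈ R, ∀ y : R, q.2 (y : V) = Ω ⟨q.1, hx⟩ y := fun q => Iff.rfl
  -- extension: for any x ∈ R there is η : Dual V with η|_R = Ω(x,·)
  have hext : ∀ x : R, ∃ η : Module.Dual ℝ V, ∀ y : R, η (y : V) = Ω x y := by
    intro x
    obtain ⟨g, hg⟩ := LinearMap.exists_extend (Ω x)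
    exact ⟨g, fun y => by simpa using LinearMap.congr_fun hg y⟩
  have hiso : IsIsotropic L := by
    rintro ⟨a, α⟩ ⟨ha, hα⟩ ⟨b, β⟩ ⟨hb, hβ⟩
    simp only [canPairing, hα ⟨b, hb⟩, hβ ⟨a, ha⟩]
    rw [hanti ⟨b, hb⟩ ⟨a, ha⟩]; ring
  refine ⟨L, rfl, ⟨hiso, ?_⟩, ?_, ?_⟩
  · -- maximality
    intro L' hL' hLL'
    refine le_antisymm (fun q hq => ?_) hLL'
    obtain ⟨x, η⟩ := q
    have hxR : x ∈ R := by
      by_contra hx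
      obtain ⟨f, hfx, hfR⟩ := R.exists_dual_map_eq_bot_of_notMem hx inferInstance
      have hfR' : ∀ y : R, f (y : V) = 0 := by
        intro y
        have : f (y : V) ∈ R.map f := ⟨y, y.2, rfl⟩
        rwa [hfR] at this
      have h0f : ((0 : V), f) ∈ L := ⟨R.zero_mem, fun y => by
        have : (⟨(0 : V), R.zero_mem⟩ : R) = 0 := rfl
        simp [hfR' y, this]⟩
      have := hL' _ hq _ (hLL' h0f)
      simp only [canPairing, map_zero, zero_add] at this
      exact hfx this
    refine ⟨hxR, fun y => ?_⟩
    obtain ⟨μ, hμ⟩ := hext y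
    have hyL : ((y : V), μ) ∈ L := ⟨y.2, fun z => by simpa using hμ z⟩
    have := hL' _ hq _ (hLL' hyL)
    simp only [canPairing] at this
    have h1 : η (y : V) = - Ω y ⟨x, hxR⟩ := by
      have := hμ ⟨x, hxR⟩
      linarith
    rw [h1, ← hanti ⟨x, hxR⟩ y]
  · -- projection equals R
    ext x
    constructor
    · rintro ⟨⟨a, α⟩, ⟨ha, -⟩, rfl⟩; exact ha
    · intro hx
      obtain ⟨η, hη⟩ := hext ⟨x, hx⟩
      exact ⟨(x, η), ⟨hx, hη⟩, rfl⟩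
  · -- kernel
    intro x
    constructor
    · intro h
      exact ⟨x.2, fun y => by simp [h y]⟩
    · rintro ⟨hx, h⟩ y
      have := h y
      simp at this
      rw [← this]
end

section
/- Let E be a Courant algebroid over a manifold M, with anchor ρ, bracket [·,·], pairing ⟨·,·⟩, and derivation 𝒟: C∞(M) → Γ(E) defined by ⟨𝒟f, e⟩ = ρ(e)f. Then for all e ∈ Γ(E) and f, g ∈ C∞(M): (1) [e, 𝒟f] = 𝒟⟨e, 𝒟f⟩; (2) [𝒟f, e] = 0; (3) ρ(𝒟f) = 0, equivalently ⟨𝒟f, 𝒟g⟩ = 0. -/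
/-- In an (abstract) Courant algebroid — sections `E` a module over the
algebra of functions `A`, with symmetric nondegenerate `A`-valued pairing `P`, ℝ-bilinear
Courant bracket `br`, anchor `ρ` landing in derivations of `A`, and `D : A → E` defined by
`P (D f) e = ρ e f` — one has `[e, D f] = D ⟨e, D f⟩`, `[D f, e] = 0`, `ρ (D f) = 0`
and `⟨D f, D g⟩ = 0`. -/
theorem stmt16 (A : Type*) [CommRing A] [Algebra ℝ A]
    (E : Type*) [AddCommGroup E] [Module A E] [Module ℝ E] [IsScalarTower ℝ A E]
    (P : E →ₗ[A] E →ₗ[A] A)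
    (br : E →ₗ[ℝ] E →ₗ[ℝ] E)
    (ρ : E →ₗ[A] Derivation ℝ A A)
    (D : A → E)
    (hPsymm : ∀ x y : E, P x y = P y x)
    (hPnondeg : ∀ x : E, (∀ y : E, P x y = 0) → x = 0)
    (hD : ∀ (f : A) (e : E), P (D f) e = ρ e f)
    (hgen : ∀ g : A, ∃ e₁ e₂ : E, g = P e₁ e₂)
    (hjac : ∀ e₁ e₂ e₃ : E, br e₁ (br e₂ e₃) = br (br e₁ e₂) e₃ + br e₂ (br e₁ e₃))
    (hskew : ∀ e₁ e₂ : E, br e₁ e₂ + br e₂ e₁ = D (P e₁ e₂))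
    (hinv : ∀ e₁ e₂ e₃ : E, ρ e₁ (P e₂ e₃) = P (br e₁ e₂) e₃ + P e₂ (br e₁ e₃))
    (hanch : ∀ e₁ e₂ : E, ρ (br e₁ e₂) = ⁅ρ e₁, ρ e₂⁆) :
    (∀ (e : E) (f : A), br e (D f) = D (P e (D f))) ∧
    (∀ (f : A) (e : E), br (D f) e = 0) ∧
    (∀ f : A, ρ (D f) = 0) ∧
    (∀ f g : A, P (D f) (D g) = 0) := by
  have key : ∀ (e : E) (f : A), br e (D f) = D (P e (D f)) := by
    intro e f
    have h0 : ∀ y : E, P (br e (D f) - D (P e (D f))) y = 0 := by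
      intro y
      have h1 : P (br e (D f)) y = ρ e (P (D f) y) - P (D f) (br e y) :=
        eq_sub_of_add_eq (hinv e (D f) y).symm
      have h2 : P (D f) (br e y) = ρ (br e y) f := hD f (br e y)
      have h3 : ρ (br e y) f = ρ e (ρ y f) - ρ y (ρ e f) := by
        rw [hanch e y, Derivation.commutator_apply]
      have h4 : P (D (P e (D f))) y = ρ y (P e (D f)) := hD _ y
      have h5 : P e (D f) = ρ e f := by rw [hPsymm, hD]
      have h6 : P (D f) y = ρ y f := hD f y
      have h7 : P (D (ρ e f)) y = ρ y (ρ e f) := hD _ y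
      simp only [map_sub, LinearMap.sub_apply, h1, h2, h3, h5, h6, h7]
      ring
    have := hPnondeg _ h0
    exact sub_eq_zero.mp this
  have keyskew : ∀ (f : A) (e : E), br (D f) e = 0 := by
    intro f e
    have h := hskew e (D f)
    rw [key e f, hPsymm e (D f)] at h
    have h2 : br e (D f) + br (D f) e = D (P (D f) e) := by
      rw [hskew e (D f), hPsymm]
    -- from h : br e (D f) + br (D f) e = D (P (D f) e) and key: br e (D f) = D (P (D f) e)
    have h3 : br e (D f) = D (P (D f) e) := by rw [key e f, hPsymm e (D f)]
    have := h2
    rw [h3] at this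
    exact add_left_cancel (a := D (P (D f) e)) (by rw [this, add_zero])
  have keyrho : ∀ f : A, ρ (D f) = 0 := by
    intro f
    ext g
    obtain ⟨e₁, e₂, rfl⟩ := hgen g
    have := hinv (D f) e₁ e₂
    rw [keyskew f e₁, keyskew f e₂] at this
    simpa using this
  refine ⟨key, keyskew, keyrho, fun f g => ?_⟩
  rw [hD f (D g), keyrho g]
  rfl
end
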